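/- For every N ∈ ℕ with Zeckendorf representation N = ∑_{j=1}^m F_{n_j} and every 1 ≤ j ≤ m, the quantity p_j = ∑_{s=j+1}^m (−φ)^{n_s − n_j} lies in the interval [−φ², φ]. -/
import Mathlib


open Real Finset

/-- The fractional part of the golden ratio. -/
noncomputable def goldenφ : ℝ := (Real.sqrt 5 - 1) / 2

lemma goldenφ_pos : 0 < goldenφ := by
  have h := Real.sq_sqrt (by norm_num : (0:ℝ) ≤ 5)
  have h2 := Real.sqrt_nonneg 5
  unfold goldenφ
  nlinarith

lemma goldenφ_lt_one : goldenφ < 1 := by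
  have h := Real.sq_sqrt (by norm_num : (0:ℝ) ≤ 5)
  have h2 := Real.sqrt_nonneg 5
  unfold goldenφ
  nlinarith

lemma goldenφ_sq : goldenφ ^ 2 = 1 - goldenφ := by
  have h := Real.sq_sqrt (by norm_num : (0:ℝ) ≤ 5)
  unfold goldenφ
  linear_combination h / 4

lemma goldenφ_key1 : goldenφ ^ 2 * (1 + goldenφ) = goldenφ := by
  linear_combination goldenφ * goldenφ_sq

lemma goldenφ_key2 : goldenφ ^ 3 * (1 + goldenφ) = goldenφ ^ 2 := by
  linear_combination goldenφ ^ 2 * goldenφ_sq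

lemma n_mono (m : ℕ) (n : ℕ → ℕ)
    (hgap : ∀ j, 1 ≤ j → j ≤ m - 1 → n j + 2 ≤ n (j + 1)) :
    ∀ a b, 1 ≤ a → a ≤ b → b ≤ m → n a ≤ n b := by
  intro a b ha hab hbm
  induction b, hab using Nat.le_induction with
  | base => exact le_refl _
  | succ b hb ih =>
      have h1 : n b + 2 ≤ n (b + 1) := hgap b (ha.trans hb) (by omega)
      have h2 := ih (by omega)
      omega

lemma pj_key (m : ℕ) (n : ℕ → ℕ)
    (hgap : ∀ j, 1 ≤ j → j ≤ m - 1 → n j + 2 ≤ n (j + 1)) :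
    ∀ k j, m - j = k → 1 ≤ j → j ≤ m →
      (∑ s ∈ Finset.Icc (j + 1) m, (-goldenφ) ^ (n s - n j)) ∈
        Set.Icc (-goldenφ ^ 2) goldenφ := by
  have hφ := goldenφ_pos
  have hφ1 := goldenφ_lt_one
  have hsq := goldenφ_sq
  intro k
  induction k with
  | zero =>
      intro j hk hj1 hjm
      have : j = m := by omega
      subst this
      rw [Finset.Icc_eq_empty (by omega), Finset.sum_empty]
      constructor <;> nlinarith [sq_nonneg goldenφ]
  | succ k ih =>
      intro j hk hj1 hjm
      have hjm' : j + 1 ≤ m := by omega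
      have hd2 : n j + 2 ≤ n (j + 1) := hgap j hj1 (by omega)
      have hT := ih (j + 1) (by omega) (by omega) hjm'
      set T := ∑ s ∈ Finset.Icc (j + 1 + 1) m, (-goldenφ) ^ (n s - n (j + 1)) with hTdef
      have hins : Finset.Icc (j + 1) m = insert (j + 1) (Finset.Icc (j + 2) m) := by
        ext x
        simp only [Finset.mem_Icc, Finset.mem_insert]
        omega
      have hfac : ∀ s ∈ Finset.Icc (j + 2) m,
          (-goldenφ) ^ (n s - n j)
            = (-goldenφ) ^ (n (j + 1) - n j) * (-goldenφ) ^ (n s - n (j + 1)) := by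
        intro s hs
        simp only [Finset.mem_Icc] at hs
        rw [← pow_add]
        congr 1
        have h1 := n_mono m n hgap (j + 1) s (by omega) (by omega) hs.2
        omega
      rw [hins, Finset.sum_insert (by simp), Finset.sum_congr rfl hfac, ← Finset.mul_sum]
      set d := n (j + 1) - n j with hddef
      have hdge : 2 ≤ d := by omega
      simp only [Set.mem_Icc] at hT ⊢
      rcases Nat.even_or_odd d with he | ho
      · rw [he.neg_pow]
        have hdle : goldenφ ^ d ≤ goldenφ ^ 2 :=
          pow_le_pow_of_le_one hφ.le hφ1.le hdge
        have hdnn : (0:ℝ) ≤ goldenφ ^ d := pow_nonneg hφ.le d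
        have h1 : goldenφ ≤ 1 + T := by linarith [hT.1]
        have h0 : (0:ℝ) ≤ 1 + T := by linarith
        have h2 : goldenφ ^ d * (1 + T) ≤ goldenφ ^ 2 * (1 + T) :=
          mul_le_mul_of_nonneg_right hdle h0
        have h3 : goldenφ ^ 2 * (1 + T) ≤ goldenφ ^ 2 * (1 + goldenφ) :=
          mul_le_mul_of_nonneg_left (by linarith [hT.2]) (sq_nonneg _)
        have h4 : (0:ℝ) ≤ goldenφ ^ d * (1 + T) := mul_nonneg hdnn h0
        constructor
        · nlinarith [sq_nonneg goldenφ]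
        · nlinarith [goldenφ_key1]
      · rw [ho.neg_pow]
        have hd3 : 3 ≤ d := by
          rcases ho with ⟨c, hc⟩; omega
        have hdle : goldenφ ^ d ≤ goldenφ ^ 3 :=
          pow_le_pow_of_le_one hφ.le hφ1.le hd3
        have hdnn : (0:ℝ) ≤ goldenφ ^ d := pow_nonneg hφ.le d
        have h1 : goldenφ ≤ 1 + T := by linarith [hT.1]
        have h0 : (0:ℝ) ≤ 1 + T := by linarith
        have h2 : goldenφ ^ d * (1 + T) ≤ goldenφ ^ 3 * (1 + T) :=
          mul_le_mul_of_nonneg_right hdle h0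
        have h3 : goldenφ ^ 3 * (1 + T) ≤ goldenφ ^ 3 * (1 + goldenφ) :=
          mul_le_mul_of_nonneg_left (by linarith [hT.2]) (pow_nonneg hφ.le 3)
        have h4 : (0:ℝ) ≤ goldenφ ^ d * (1 + T) := mul_nonneg hdnn h0
        constructor
        · nlinarith [goldenφ_key2]
        · nlinarith

/-- For every `N ∈ ℕ` with Zeckendorf representation `N = ∑_{j=1}^m F_{n_j}` and every
`1 ≤ j ≤ m`, the quantity `p_j = ∑_{s=j+1}^m (−φ)^{n_s − n_j}` lies in `[−φ², φ]`. -/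
theorem pj_mem_Icc
    (N m : ℕ) (n : ℕ → ℕ) (hm : 1 ≤ m) (hn1 : 2 ≤ n 1)
    (hgap : ∀ j, 1 ≤ j → j ≤ m - 1 → n j + 2 ≤ n (j + 1))
    (hN : N = ∑ j ∈ Finset.Icc 1 m, Nat.fib (n j))
    (j : ℕ) (hj1 : 1 ≤ j) (hjm : j ≤ m) :
    (∑ s ∈ Finset.Icc (j + 1) m, (-goldenφ) ^ (n s - n j)) ∈
      Set.Icc (-goldenφ ^ 2) goldenφ := by
  exact pj_key m n hgap (m - j) j rfl hj1 hjm
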